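/- Let n ≥ 3, let a_0(n), a_1(n) be real numbers with 2a_0(n) + a_1(n) = 1, and let f : [0,1] → ℝ be bounded. Then ‖B_n^{M,1}(f) − f‖_∞ ≤ 2(3|a_1(n)| + 1)·ω₁(f; 1/√n), i.e. |B_n^{M,1}(f;x) − f(x)| ≤ 2(3|a_1(n)| + 1)·ω₁(f; 1/√n) for all x ∈ [0,1]. -/

import Mathlib

open scoped BigOperators
open Set Filter MeasureTheory

/-- Bernstein fundamental function `p_{n,k}` (vanishes for `k > n` since `choose = 0`). -/
noncomputable def bp (n k : ℕ) (x : ℝ) : ℝ :=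
  (n.choose k : ℝ) * x ^ k * (1 - x) ^ (n - k)

/-- Bernstein fundamental function with integer index, vanishing for negative `k`. -/
noncomputable def bpz (n : ℕ) (k : ℤ) (x : ℝ) : ℝ :=
  if 0 ≤ k then bp n k.toNat x else 0

/-- The classical Bernstein operator `B_n`. -/
noncomputable def Bern (n : ℕ) (f : ℝ → ℝ) (x : ℝ) : ℝ :=
  ∑ k ∈ Finset.range (n + 1), bp n k x * f (k / n)

/-- Modified fundamental function `p_{n,k}^{M,1}` with `a(x,n) = a1*x + a0`. -/
noncomputable def bpM1 (a0 a1 : ℝ) (n k : ℕ) (x : ℝ) : ℝ :=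
  (a1 * x + a0) * bp (n - 1) k x + (a1 * (1 - x) + a0) * bpz (n - 1) ((k : ℤ) - 1) x

/-- The modified Bernstein operator `B_n^{M,1}`. -/
noncomputable def BernM1 (a0 a1 : ℝ) (n : ℕ) (f : ℝ → ℝ) (x : ℝ) : ℝ :=
  ∑ k ∈ Finset.range (n + 1), bpM1 a0 a1 n k x * f (k / n)

/-- Second modified fundamental function `p_{n,k}^{M,2}`. -/
noncomputable def bpM2 (n k : ℕ) (x : ℝ) : ℝ :=
  ((n : ℝ) / 2 * x ^ 2 + (-1 - (n : ℝ) / 2) * x + 1) * bp (n - 2) k x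
    + (n : ℝ) * x * (1 - x) * bpz (n - 2) ((k : ℤ) - 1) x
    + ((n : ℝ) / 2 * x ^ 2 + (-(n : ℝ) / 2 + 1) * x) * bpz (n - 2) ((k : ℤ) - 2) x

/-- The second modified Bernstein operator `B_n^{M,2}`. -/
noncomputable def BernM2 (n : ℕ) (f : ℝ → ℝ) (x : ℝ) : ℝ :=
  ∑ k ∈ Finset.range (n + 1), bpM2 n k x * f (k / n)

/-- The Kantorovich operator `K_n`. -/
noncomputable def Kan (n : ℕ) (f : ℝ → ℝ) (x : ℝ) : ℝ :=
  ((n : ℝ) + 1) * ∑ k ∈ Finset.range (n + 1),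
    bp n k x * ∫ t in ((k : ℝ) / (n + 1))..(((k : ℝ) + 1) / (n + 1)), f t

/-- The modified Kantorovich operator `K_n^{M,1}`. -/
noncomputable def KanM1 (a0 a1 : ℝ) (n : ℕ) (f : ℝ → ℝ) (x : ℝ) : ℝ :=
  ((n : ℝ) + 1) * ∑ k ∈ Finset.range (n + 1),
    bpM1 a0 a1 n k x * ∫ t in ((k : ℝ) / (n + 1))..(((k : ℝ) + 1) / (n + 1)), f t

/-- The Durrmeyer operator `D_n`. -/
noncomputable def Dur (n : ℕ) (f : ℝ → ℝ) (x : ℝ) : ℝ :=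
  ((n : ℝ) + 1) * ∑ k ∈ Finset.range (n + 1),
    bp n k x * ∫ t in (0:ℝ)..1, bp n k t * f t

/-- The modified Durrmeyer operator `D_n^{M,1}`. -/
noncomputable def DurM1 (a0 a1 : ℝ) (n : ℕ) (f : ℝ → ℝ) (x : ℝ) : ℝ :=
  ((n : ℝ) + 1) * ∑ k ∈ Finset.range (n + 1),
    bpM1 a0 a1 n k x * ∫ t in (0:ℝ)..1, bp n k t * f t

/-- The genuine Bernstein–Durrmeyer operator `U_n`. -/
noncomputable def Gen (n : ℕ) (f : ℝ → ℝ) (x : ℝ) : ℝ :=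
  (1 - x) ^ n * f 0 + x ^ n * f 1 +
    ((n : ℝ) - 1) * ∑ k ∈ Finset.Icc 1 (n - 1),
      bp n k x * ∫ t in (0:ℝ)..1, bp (n - 2) (k - 1) t * f t

/-- The modified genuine Bernstein–Durrmeyer operator `U_n^{M,1}`. -/
noncomputable def GenM1 (a0 a1 : ℝ) (n : ℕ) (f : ℝ → ℝ) (x : ℝ) : ℝ :=
  (a1 * x + a0) * (1 - x) ^ (n - 1) * f 0 + (a1 * (1 - x) + a0) * x ^ (n - 1) * f 1 +
    ((n : ℝ) - 1) * ∑ k ∈ Finset.Icc 1 (n - 1),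
      bpM1 a0 a1 n k x * ∫ t in (0:ℝ)..1, bp (n - 2) (k - 1) t * f t

/-- First modulus of continuity on `[0,1]`. -/
noncomputable def omega1 (f : ℝ → ℝ) (δ : ℝ) : ℝ :=
  sSup {y | ∃ s t : ℝ, s ∈ Icc (0:ℝ) 1 ∧ t ∈ Icc (0:ℝ) 1 ∧ |s - t| ≤ δ ∧ y = |f s - f t|}

/-- Second modulus of smoothness on `[0,1]`. -/
noncomputable def omega2 (f : ℝ → ℝ) (δ : ℝ) : ℝ :=
  sSup {y | ∃ t h : ℝ, 0 < h ∧ h ≤ δ ∧ t - h ∈ Icc (0:ℝ) 1 ∧ t + h ∈ Icc (0:ℝ) 1 ∧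
    y = |f (t + h) - 2 * f t + f (t - h)|}

/-- Sup norm on `[0,1]`. -/
noncomputable def supNorm (g : ℝ → ℝ) : ℝ :=
  sSup {y | ∃ t ∈ Icc (0:ℝ) 1, y = |g t|}

lemma bp_eq_eval (m k : ℕ) (x : ℝ) : bp m k x = (bernsteinPolynomial ℝ m k).eval x := by
  simp [bp, bernsteinPolynomial]

lemma bp_nonneg (m k : ℕ) {x : ℝ} (hx : x ∈ Icc (0:ℝ) 1) : 0 ≤ bp m k x := by
  have h1 : (0:ℝ) ≤ x := hx.1
  have h2 : (0:ℝ) ≤ 1 - x := by linarith [hx.2]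
  exact mul_nonneg (mul_nonneg (by positivity) (by positivity)) (by positivity)

lemma sum_bp (m : ℕ) (x : ℝ) : ∑ k ∈ Finset.range (m+1), bp m k x = 1 := by
  have := congrArg (Polynomial.eval x) (bernsteinPolynomial.sum ℝ m)
  simpa [bp_eq_eval, Polynomial.eval_finset_sum] using this

lemma sum_k_bp (m : ℕ) (x : ℝ) : ∑ k ∈ Finset.range (m+1), (k:ℝ) * bp m k x = m * x := by
  have := congrArg (Polynomial.eval x) (bernsteinPolynomial.sum_smul ℝ m)
  simpa [bp_eq_eval, Polynomial.eval_finset_sum] using this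

lemma sum_kk_bp (m : ℕ) (x : ℝ) :
    ∑ k ∈ Finset.range (m+1), ((k:ℝ)^2 - k) * bp m k x = (m*(m-1) : ℕ) * x^2 := by
  have := congrArg (Polynomial.eval x) (bernsteinPolynomial.sum_mul_smul ℝ m)
  rw [Polynomial.eval_finset_sum] at this
  simp only [Polynomial.eval_smul, smul_eq_mul, Polynomial.eval_pow, Polynomial.eval_X, nsmul_eq_mul, Polynomial.eval_mul, Polynomial.eval_natCast] at this
  rw [← this]
  apply Finset.sum_congr rfl
  intro k _
  rw [bp_eq_eval]
  rcases k with _ | j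
  · simp
  · push_cast [Nat.succ_sub_one]
    ring

lemma moment_shift (m : ℕ) (x c e : ℝ) (hc : c ≠ 0) :
    ∑ k ∈ Finset.range (m+1), bp m k x * (((k:ℝ)+e)/c - x)^2
    = (1/c^2) * ((m*(m-1) : ℕ) * x^2) + (1/c^2 + 2*e/c^2 - 2*x/c) * (m*x)
      + (e^2/c^2 - 2*e*x/c + x^2) := by
  have h0 := sum_bp m x
  have h1 := sum_k_bp m x
  have h2 := sum_kk_bp m x
  calc ∑ k ∈ Finset.range (m+1), bp m k x * (((k:ℝ)+e)/c - x)^2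
      = ∑ k ∈ Finset.range (m+1), ((1/c^2) * (((k:ℝ)^2 - k) * bp m k x)
        + (1/c^2 + 2*e/c^2 - 2*x/c) * ((k:ℝ) * bp m k x)
        + (e^2/c^2 - 2*e*x/c + x^2) * bp m k x) := by
        apply Finset.sum_congr rfl; intro k _; field_simp; ring
    _ = (1/c^2) * (∑ k ∈ Finset.range (m+1), ((k:ℝ)^2 - k) * bp m k x)
        + (1/c^2 + 2*e/c^2 - 2*x/c) * (∑ k ∈ Finset.range (m+1), (k:ℝ) * bp m k x)
        + (e^2/c^2 - 2*e*x/c + x^2) * (∑ k ∈ Finset.range (m+1), bp m k x) := by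
        rw [Finset.sum_add_distrib, Finset.sum_add_distrib, Finset.mul_sum, Finset.mul_sum,
          Finset.mul_sum]
    _ = _ := by rw [h0, h1, h2]; ring

lemma moment_bound (n : ℕ) (hn : 3 ≤ n) {x : ℝ} (hx : x ∈ Icc (0:ℝ) 1) (e : ℝ)
    (he : e = 0 ∨ e = 1) :
    ∑ k ∈ Finset.range n, bp (n-1) k x * (((k:ℝ)+e)/n - x)^2 ≤ 1/n := by
  have hm : (n - 1) + 1 = n := by omega
  have hN : (0:ℝ) < n := by positivity
  have hN3 : (3:ℝ) ≤ n := by exact_mod_cast hn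
  have hcast : ((n-1 : ℕ) : ℝ) = (n:ℝ) - 1 := by
    have : (1:ℕ) ≤ n := by omega
    push_cast [this]; ring
  have hcast2 : (((n-1)*(n-1-1) : ℕ) : ℝ) = ((n:ℝ) - 1) * ((n:ℝ) - 2) := by
    have h1 : (1:ℕ) ≤ n := by omega
    have h2 : (1:ℕ) ≤ n - 1 := by omega
    push_cast [h1, h2]; ring
  have key := moment_shift (n-1) x (n:ℝ) e (ne_of_gt hN)
  rw [hm, hcast, hcast2] at key
  rw [key]
  have hx0 := hx.1
  have hx1 := hx.2
  have hex : (e - x)^2 ≤ 1 := by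
    rcases he with he | he <;> subst he <;> nlinarith
  have hEP : 1 / (n:ℝ)^2 * (((n:ℝ) - 1) * ((n:ℝ) - 2) * x ^ 2)
      + (1 / (n:ℝ)^2 + 2 * e / (n:ℝ)^2 - 2 * x / (n:ℝ)) * (((n:ℝ) - 1) * x)
      + (e^2 / (n:ℝ)^2 - 2 * e * x / (n:ℝ) + x^2)
      = (((n:ℝ) - 1) * x * (1 - x) + (e - x)^2) / (n:ℝ)^2 := by
    field_simp
    ring
  rw [hEP, div_le_div_iff₀ (by positivity) hN]
  nlinarith [mul_nonneg (by linarith : (0:ℝ) ≤ (n:ℝ) - 1) (sq_nonneg (2*x - 1))]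


lemma omega1_bdd (f : ℝ → ℝ) (M : ℝ) (hb : ∀ t ∈ Icc (0:ℝ) 1, |f t| ≤ M) (δ : ℝ) :
    BddAbove {y | ∃ s t : ℝ, s ∈ Icc (0:ℝ) 1 ∧ t ∈ Icc (0:ℝ) 1 ∧ |s - t| ≤ δ ∧ y = |f s - f t|} := by
  refine ⟨2*M, ?_⟩
  rintro y ⟨s, t, hs, ht, _, rfl⟩
  calc |f s - f t| ≤ |f s| + |f t| := abs_sub _ _
    _ ≤ 2*M := by linarith [hb s hs, hb t ht]

lemma omega1_nonneg (f : ℝ → ℝ) (M : ℝ) (hb : ∀ t ∈ Icc (0:ℝ) 1, |f t| ≤ M) {δ : ℝ}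
    (hδ : 0 ≤ δ) : 0 ≤ omega1 f δ := by
  have h0 : (0:ℝ) ∈ {y | ∃ s t : ℝ, s ∈ Icc (0:ℝ) 1 ∧ t ∈ Icc (0:ℝ) 1 ∧ |s - t| ≤ δ ∧ y = |f s - f t|} :=
    ⟨0, 0, ⟨le_refl 0, zero_le_one⟩, ⟨le_refl 0, zero_le_one⟩, by simpa using hδ, by simp⟩
  exact le_csSup (omega1_bdd f M hb δ) h0

lemma omega1_mem_le (f : ℝ → ℝ) (M : ℝ) (hb : ∀ t ∈ Icc (0:ℝ) 1, |f t| ≤ M) {δ s t : ℝ}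
    (hs : s ∈ Icc (0:ℝ) 1) (ht : t ∈ Icc (0:ℝ) 1) (hst : |s - t| ≤ δ) :
    |f s - f t| ≤ omega1 f δ :=
  le_csSup (omega1_bdd f M hb δ) ⟨s, t, hs, ht, hst, rfl⟩

lemma omega1_est (f : ℝ → ℝ) (M : ℝ) (hb : ∀ t ∈ Icc (0:ℝ) 1, |f t| ≤ M) {δ s t : ℝ}
    (hδ : 0 < δ) (hs : s ∈ Icc (0:ℝ) 1) (ht : t ∈ Icc (0:ℝ) 1) :
    |f s - f t| ≤ (1 + |s - t|/δ) * omega1 f δ := by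
  set d : ℝ := |s - t| with hd
  have hd0 : 0 ≤ d := abs_nonneg _
  set N : ℕ := ⌊d/δ⌋₊ + 1 with hNdef
  have hN0 : (0:ℝ) < N := by positivity
  have hdN : d < N * δ := by
    have h := Nat.lt_floor_add_one (d/δ)
    calc d = (d/δ) * δ := by field_simp
      _ < (⌊d/δ⌋₊ + 1) * δ := by apply mul_lt_mul_of_pos_right h hδ
      _ = N * δ := by push_cast [hNdef]; ring
  have hNle : (N:ℝ) ≤ 1 + d/δ := by
    have := Nat.floor_le (show 0 ≤ d/δ by positivity)
    push_cast [hNdef]; linarith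
  set u : ℕ → ℝ := fun i => t + (i:ℝ)/N * (s - t) with hu
  have hu0 : u 0 = t := by simp [hu]
  have huN : u N = s := by
    simp only [hu]
    field_simp
    ring
  have humem : ∀ i ≤ N, u i ∈ Icc (0:ℝ) 1 := by
    intro i hi
    have hl : (0:ℝ) ≤ (i:ℝ)/N := by positivity
    have hr : (i:ℝ)/N ≤ 1 := by
      rw [div_le_one hN0]; exact_mod_cast hi
    have hs1 := hs.1; have hs2 := hs.2; have ht1 := ht.1; have ht2 := ht.2
    have hval : u i = t + (i:ℝ)/N * (s - t) := by simp [hu]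
    rcases le_or_gt t s with h | h
    · have p1 : 0 ≤ (i:ℝ)/N * (s - t) := mul_nonneg hl (by linarith)
      have p2 : (i:ℝ)/N * (s - t) ≤ s - t := by nlinarith
      constructor <;> rw [hval] <;> linarith
    · have p1 : (i:ℝ)/N * (s - t) ≤ 0 := mul_nonpos_of_nonneg_of_nonpos hl (by linarith)
      have p2 : s - t ≤ (i:ℝ)/N * (s - t) := by nlinarith
      constructor <;> rw [hval] <;> linarith
  have hstep : ∀ i, |u (i+1) - u i| ≤ δ := by
    intro i
    have : u (i+1) - u i = (s - t)/N := by
      simp only [hu]; push_cast; field_simp; ring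
    rw [this, abs_div, abs_of_pos hN0, div_le_iff₀ hN0, ← hd]
    linarith
  have htel : f s - f t = ∑ i ∈ Finset.range N, (f (u (i+1)) - f (u i)) := by
    rw [Finset.sum_range_sub (fun i => f (u i)), hu0, huN]
  have habs : |f s - f t| ≤ ∑ i ∈ Finset.range N, |f (u (i+1)) - f (u i)| := by
    rw [htel]; exact Finset.abs_sum_le_sum_abs _ _
  have hterm : ∀ i ∈ Finset.range N, |f (u (i+1)) - f (u i)| ≤ omega1 f δ := by
    intro i hi
    rw [Finset.mem_range] at hi
    exact omega1_mem_le f M hb (humem (i+1) (by omega)) (humem i (by omega)) (hstep i)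
  calc |f s - f t| ≤ ∑ i ∈ Finset.range N, |f (u (i+1)) - f (u i)| := habs
    _ ≤ ∑ _i ∈ Finset.range N, omega1 f δ := Finset.sum_le_sum hterm
    _ = (N:ℝ) * omega1 f δ := by rw [Finset.sum_const, Finset.card_range]; simp
    _ ≤ (1 + d/δ) * omega1 f δ := by
        apply mul_le_mul_of_nonneg_right hNle (omega1_nonneg f M hb hδ.le)


/-- uniform estimate for `B_n^{M,1}` for bounded `f`. -/
theorem stmt4 (n : ℕ) (hn : 3 ≤ n) (a0 a1 : ℝ) (ha : 2 * a0 + a1 = 1)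
    (f : ℝ → ℝ) (hb : ∃ M : ℝ, ∀ t ∈ Icc (0:ℝ) 1, |f t| ≤ M) :
    ∀ x ∈ Icc (0:ℝ) 1,
      |BernM1 a0 a1 n f x - f x| ≤
        2 * (3 * |a1| + 1) * omega1 f (1 / Real.sqrt n) := by
  obtain ⟨M, hb⟩ := hb
  intro x hx
  have hn0 : (0:ℝ) < n := by
    have : 0 < n := by omega
    exact_mod_cast this
  have hsq : (0:ℝ) < Real.sqrt n := Real.sqrt_pos.2 hn0
  set δ : ℝ := 1 / Real.sqrt n with hδdef
  have hδ : 0 < δ := by positivity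
  set ω := omega1 f δ with hωdef
  have hω0 : 0 ≤ ω := omega1_nonneg f M hb hδ.le
  -- pointwise modulus estimate
  have est : ∀ s ∈ Icc (0:ℝ) 1, |f s - f x| ≤ (3/2 + (n:ℝ)/2 * (s - x)^2) * ω := by
    intro s hsm
    have h1 := omega1_est f M hb hδ hsm hx
    have h3 : 1 + |s - x|/δ ≤ 3/2 + (n:ℝ)/2 * (s - x)^2 := by
      rw [hδdef, one_div, div_inv_eq_mul]
      have hsq2 : (Real.sqrt n)^2 = n := Real.sq_sqrt hn0.le
      nlinarith [sq_nonneg (Real.sqrt n * |s - x| - 1), sq_abs (s - x)]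
    exact h1.trans (mul_le_mul_of_nonneg_right h3 hω0)
  have hm : (n - 1) + 1 = n := by omega
  have sum1 : ∑ k ∈ Finset.range n, bp (n-1) k x = 1 := by
    rw [← hm]; exact sum_bp (n-1) x
  set A := a1 * x + a0 with hA
  set B := a1 * (1 - x) + a0 with hB
  have hAB : A + B = 1 := by rw [hA, hB]; ring_nf; linarith
  -- rewrite the operator
  have h1 : ∑ k ∈ Finset.range (n+1), bp (n-1) k x * f (k/n)
      = ∑ k ∈ Finset.range n, bp (n-1) k x * f (k/n) := by
    rw [Finset.sum_range_succ]
    have : bp (n-1) n x = 0 := by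
      simp [bp, Nat.choose_eq_zero_of_lt (show n - 1 < n by omega)]
    rw [this]; ring
  have h2 : ∑ k ∈ Finset.range (n+1), bpz (n-1) ((k:ℤ) - 1) x * f (k/n)
      = ∑ k ∈ Finset.range n, bp (n-1) k x * f (((k:ℝ)+1)/n) := by
    rw [Finset.sum_range_succ']
    have h0 : bpz (n-1) ((0:ℕ):ℤ) x = bpz (n-1) 0 x := rfl
    simp only [Nat.cast_zero, zero_sub]
    rw [show bpz (n-1) (-1) x = 0 from by simp [bpz]]
    rw [zero_mul, add_zero]
    apply Finset.sum_congr rfl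
    intro k _
    have : ((k+1 : ℕ) : ℤ) - 1 = (k : ℤ) := by push_cast; ring
    rw [this]
    have : bpz (n-1) (k:ℤ) x = bp (n-1) k x := by simp [bpz]
    rw [this]
    norm_num
  have hexp : BernM1 a0 a1 n f x
      = A * (∑ k ∈ Finset.range n, bp (n-1) k x * f (k/n))
        + B * (∑ k ∈ Finset.range n, bp (n-1) k x * f (((k:ℝ)+1)/n)) := by
    unfold BernM1
    have hterm : ∀ k : ℕ, bpM1 a0 a1 n k x * f (k/n)
        = A * (bp (n-1) k x * f (k/n)) + B * (bpz (n-1) ((k:ℤ)-1) x * f (k/n)) := by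
      intro k; rw [bpM1, hA, hB]; ring
    simp_rw [hterm]
    rw [Finset.sum_add_distrib, ← Finset.mul_sum, ← Finset.mul_sum, h1, h2]
  have hrw : BernM1 a0 a1 n f x - f x
      = A * (∑ k ∈ Finset.range n, bp (n-1) k x * (f (k/n) - f x))
        + B * (∑ k ∈ Finset.range n, bp (n-1) k x * (f (((k:ℝ)+1)/n) - f x)) := by
    have e1 : ∑ k ∈ Finset.range n, bp (n-1) k x * (f (k/n) - f x)
        = (∑ k ∈ Finset.range n, bp (n-1) k x * f (k/n)) - f x := by
      simp_rw [mul_sub]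
      rw [Finset.sum_sub_distrib, ← Finset.sum_mul, sum1, one_mul]
    have e2 : ∑ k ∈ Finset.range n, bp (n-1) k x * (f (((k:ℝ)+1)/n) - f x)
        = (∑ k ∈ Finset.range n, bp (n-1) k x * f (((k:ℝ)+1)/n)) - f x := by
      simp_rw [mul_sub]
      rw [Finset.sum_sub_distrib, ← Finset.sum_mul, sum1, one_mul]
    rw [e1, e2, hexp]
    linear_combination (f x) * hAB
  -- the two key sum bounds
  have keybound : ∀ e : ℝ, e = 0 ∨ e = 1 →
      ∑ k ∈ Finset.range n, bp (n-1) k x * |f (((k:ℝ)+e)/n) - f x| ≤ 2 * ω := by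
    intro e he
    have hmem : ∀ k ∈ Finset.range n, ((k:ℝ)+e)/n ∈ Icc (0:ℝ) 1 := by
      intro k hk
      rw [Finset.mem_range] at hk
      have he0 : (0:ℝ) ≤ e := by rcases he with h | h <;> simp [h]
      have he1 : e ≤ 1 := by rcases he with h | h <;> simp [h]
      constructor
      · positivity
      · rw [div_le_one hn0]
        have : (k:ℝ) + 1 ≤ n := by exact_mod_cast hk
        linarith
    calc ∑ k ∈ Finset.range n, bp (n-1) k x * |f (((k:ℝ)+e)/n) - f x|
        ≤ ∑ k ∈ Finset.range n, bp (n-1) k x * ((3/2 + (n:ℝ)/2 * (((k:ℝ)+e)/n - x)^2) * ω) := by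
          apply Finset.sum_le_sum
          intro k hk
          exact mul_le_mul_of_nonneg_left (est _ (hmem k hk)) (bp_nonneg _ _ hx)
      _ = (3/2) * ω * (∑ k ∈ Finset.range n, bp (n-1) k x)
          + (n:ℝ)/2 * ω * (∑ k ∈ Finset.range n, bp (n-1) k x * (((k:ℝ)+e)/n - x)^2) := by
          rw [Finset.mul_sum, Finset.mul_sum, ← Finset.sum_add_distrib]
          apply Finset.sum_congr rfl
          intro k _; ring
      _ ≤ (3/2) * ω * 1 + (n:ℝ)/2 * ω * (1/n) := by
          have hmb := moment_bound n hn hx e he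
          rw [sum1]
          have := mul_le_mul_of_nonneg_left hmb (by positivity : (0:ℝ) ≤ (n:ℝ)/2 * ω)
          linarith
      _ = 2 * ω := by field_simp; ring
  have hS : ∀ e : ℝ, e = 0 ∨ e = 1 →
      |∑ k ∈ Finset.range n, bp (n-1) k x * (f (((k:ℝ)+e)/n) - f x)| ≤ 2 * ω := by
    intro e he
    calc |∑ k ∈ Finset.range n, bp (n-1) k x * (f (((k:ℝ)+e)/n) - f x)|
        ≤ ∑ k ∈ Finset.range n, |bp (n-1) k x * (f (((k:ℝ)+e)/n) - f x)| :=
          Finset.abs_sum_le_sum_abs _ _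
      _ = ∑ k ∈ Finset.range n, bp (n-1) k x * |f (((k:ℝ)+e)/n) - f x| := by
          apply Finset.sum_congr rfl
          intro k _
          rw [abs_mul, abs_of_nonneg (bp_nonneg _ _ hx)]
      _ ≤ 2 * ω := keybound e he
  have hS1 := hS 0 (Or.inl rfl)
  have hS2 := hS 1 (Or.inr rfl)
  simp only [add_zero] at hS1
  -- bounds on |A| and |B|
  have hxh : |x - 1/2| ≤ 1/2 := abs_le.2 ⟨by linarith [hx.1], by linarith [hx.2]⟩
  have hAbnd : |A| ≤ (|a1| + 1)/2 := by
    have : A = a1 * (x - 1/2) + 1/2 := by rw [hA]; ring_nf; linarith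
    rw [this]
    calc |a1 * (x - 1/2) + 1/2| ≤ |a1 * (x - 1/2)| + |1/2| := abs_add_le _ _
      _ = |a1| * |x - 1/2| + 1/2 := by rw [abs_mul]; norm_num
      _ ≤ |a1| * (1/2) + 1/2 := by
          have := mul_le_mul_of_nonneg_left hxh (abs_nonneg a1)
          linarith
      _ = (|a1| + 1)/2 := by ring
  have hBbnd : |B| ≤ (|a1| + 1)/2 := by
    have : B = a1 * ((1-x) - 1/2) + 1/2 := by rw [hB]; ring_nf; linarith
    rw [this]
    have hxh2 : |(1-x) - 1/2| ≤ 1/2 := abs_le.2 ⟨by linarith [hx.2], by linarith [hx.1]⟩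
    calc |a1 * ((1-x) - 1/2) + 1/2| ≤ |a1 * ((1-x) - 1/2)| + |1/2| := abs_add_le _ _
      _ = |a1| * |(1-x) - 1/2| + 1/2 := by rw [abs_mul]; norm_num
      _ ≤ |a1| * (1/2) + 1/2 := by
          have := mul_le_mul_of_nonneg_left hxh2 (abs_nonneg a1)
          linarith
      _ = (|a1| + 1)/2 := by ring
  rw [hrw]
  calc |A * (∑ k ∈ Finset.range n, bp (n-1) k x * (f (k/n) - f x))
        + B * (∑ k ∈ Finset.range n, bp (n-1) k x * (f (((k:ℝ)+1)/n) - f x))|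
      ≤ |A| * |∑ k ∈ Finset.range n, bp (n-1) k x * (f (k/n) - f x)|
        + |B| * |∑ k ∈ Finset.range n, bp (n-1) k x * (f (((k:ℝ)+1)/n) - f x)| := by
        calc _ ≤ |A * _| + |B * _| := abs_add_le _ _
          _ = _ := by rw [abs_mul, abs_mul]
    _ ≤ |A| * (2*ω) + |B| * (2*ω) := by
        have := mul_le_mul_of_nonneg_left hS1 (abs_nonneg A)
        have := mul_le_mul_of_nonneg_left hS2 (abs_nonneg B)
        linarith
    _ ≤ 2 * (3 * |a1| + 1) * ω := by nlinarith [abs_nonneg a1, hω0, hAbnd, hBbnd]
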